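/- Let q₁',...,q_k' be k vectors in a linear subspace H of dimension k−1. Let S be a maximal linearly independent subset of {q₁',...,q_k'} of maximum volume (among independent subsets of that size), and let q_j' ∉ S. Write q_j' = Σ_{q_i' ∈ S} α_i q_i'. Then |α_i| ≤ 1 for every i with q_i' ∈ S. -/

import Mathlib

abbrev Pt (d : ℕ) := EuclideanSpace ℝ (Fin d)

noncomputable def gvol {d : ℕ} {ι : Type} [Fintype ι] [DecidableEq ι]
    (v : ι → Pt d) : ℝ :=
  Real.sqrt (Matrix.det (Matrix.of fun i j => (inner ℝ (v i) (v j) : ℝ)))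

open Matrix in
example : True := trivial

variable {d : ℕ} {ι : Type} [Fintype ι] [DecidableEq ι]

noncomputable def grammat (v : ι → Pt d) : Matrix ι ι ℝ :=
  Matrix.of fun i j => (inner ℝ (v i) (v j) : ℝ)

lemma dot_gram (v : ι → Pt d) (x : ι → ℝ) :
    dotProduct x ((grammat v).mulVec x) = (inner ℝ (∑ l, x l • v l) (∑ l, x l • v l) : ℝ) := by
  simp [grammat, dotProduct, Matrix.mulVec, inner_sum, sum_inner,
    real_inner_smul_left, real_inner_smul_right, Finset.mul_sum, mul_comm, mul_left_comm, real_inner_comm, -inner_self_eq_norm_sq_to_K]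

lemma gram_posdef {v : ι → Pt d} (hv : LinearIndependent ℝ v) : (grammat v).PosDef := by
  refine Matrix.PosDef.of_dotProduct_mulVec_pos ?_ ?_
  · ext a b
    simp [grammat, Matrix.conjTranspose, mul_comm, real_inner_comm]
  · intro x hx
    rw [show star x = x from rfl, dot_gram]
    have hne : ∑ l, x l • v l ≠ 0 := by
      intro h
      exact hx (funext fun l => (Fintype.linearIndependent_iff.1 hv x h) l)
    exact lt_of_le_of_ne real_inner_self_nonneg (Ne.symm (inner_self_ne_zero.2 hne))

lemma gram_det_ne_zero_ind {v : ι → Pt d} (h : (grammat v).det ≠ 0) :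
    LinearIndependent ℝ v := by
  by_contra hdep
  obtain ⟨g, hg0, i, hgi⟩ := Fintype.not_linearIndependent_iff.1 hdep
  apply h
  rw [← Matrix.exists_mulVec_eq_zero_iff]
  refine ⟨g, fun hg => hgi (congrFun hg i), ?_⟩
  ext a
  simp only [Matrix.mulVec, dotProduct, grammat, Matrix.of_apply, Pi.zero_apply]
  calc ∑ b, (inner ℝ (v a) (v b) : ℝ) * g b
      = (inner ℝ (v a) (∑ b, g b • v b) : ℝ) := by
        simp [inner_sum, real_inner_smul_right, mul_comm, mul_left_comm, Finset.mul_sum]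
    _ = 0 := by rw [hg0, inner_zero_right]

lemma gram_transform (v : ι → Pt d) (M : Matrix ι ι ℝ) :
    grammat (fun a => ∑ l, M a l • v l) = M * grammat v * M.transpose := by
  ext a b
  simp only [grammat, Matrix.of_apply, Matrix.mul_apply, Matrix.transpose_apply,
    inner_sum, sum_inner, real_inner_smul_left, real_inner_smul_right,
    Finset.sum_mul, Finset.mul_sum]
  refine Finset.sum_congr rfl fun m _ => Finset.sum_congr rfl fun l _ => ?_
  rw [real_inner_comm]; ring

lemma gvol_eq (v : ι → Pt d) : gvol v = Real.sqrt (grammat v).det := rfl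

/-- Let `q' 0, …, q' (k-1)` lie in a `(k-1)`-dimensional subspace `H`.  If `S` is a
maximal linearly independent subset of maximum volume (among independent subsets of
its size) and `q' j ∉ S` is written as `q' j = ∑_{i ∈ S} α i • q' i`, then every
coefficient satisfies `|α i| ≤ 1`. -/
theorem maxvol_subset_coeff_le_one {d k : ℕ} (H : Submodule ℝ (Pt d))
    (hH : Module.finrank ℝ H = k - 1)
    (q' : Fin k → Pt d) (hmem : ∀ i, q' i ∈ H)
    (S : Finset (Fin k))
    (hind : LinearIndependent ℝ (fun i : {x // x ∈ S} => q' i.1))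
    (hspan : ∀ j : Fin k, q' j ∈ Submodule.span ℝ (q' '' ↑S))
    (hmaxvol : ∀ S' : Finset (Fin k), S'.card = S.card →
      LinearIndependent ℝ (fun i : {x // x ∈ S'} => q' i.1) →
      gvol (fun i : {x // x ∈ S'} => q' i.1) ≤ gvol (fun i : {x // x ∈ S} => q' i.1))
    (j : Fin k) (hj : j ∉ S) (α : Fin k → ℝ)
    (hrep : q' j = ∑ i ∈ S, α i • q' i) :
    ∀ i ∈ S, |α i| ≤ 1 := by
  intro i hi
  by_cases hαi : α i = 0
  · simp [hαi]
  have hij : i ≠ j := fun hh => hj (hh ▸ hi)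
  set ι : Type := {x // x ∈ S} with hι
  let i0 : ι := ⟨i, hi⟩
  let v : ι → Pt d := fun x => q' x.1
  let G := grammat v
  have hGpos : 0 < G.det := (gram_posdef hind).det_pos
  let M : Matrix ι ι ℝ := (1 : Matrix ι ι ℝ).updateRow i0 (fun b => α b.1)
  have hdetM : M.det = α i := by
    have hc := Matrix.cramer_transpose_apply (1 : Matrix ι ι ℝ) (fun b => α b.1) i0
    rw [Matrix.transpose_one, Matrix.cramer_one] at hc
    simpa using hc.symm
  let w : ι → Pt d := fun a => if a = i0 then q' j else q' a.1
  have hw : (fun a => ∑ l, M a l • v l) = w := by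
    funext a
    by_cases ha : a = i0
    · subst ha
      simp only [M, Matrix.updateRow_self, w, if_pos rfl]
      rw [hrep]
      exact Finset.sum_coe_sort S (fun l => α l • q' l)
    · simp only [M, Matrix.updateRow_ne ha, w, if_neg ha, Matrix.one_apply]
      simp [ite_smul, v]
  have hgramw : (grammat w).det = (α i)^2 * G.det := by
    rw [← hw, gram_transform v M, Matrix.det_mul, Matrix.det_mul, Matrix.det_transpose,
      hdetM]
    ring
  have hwind : LinearIndependent ℝ w := by
    apply gram_det_ne_zero_ind
    rw [hgramw]
    positivity
  -- the swapped set
  let S' : Finset (Fin k) := insert j (S.erase i)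
  have hjS' : j ∈ S' := Finset.mem_insert_self _ _
  have memS' : ∀ x ∈ S, x ≠ i → x ∈ S' := fun x hx hxi =>
    Finset.mem_insert_of_mem (Finset.mem_erase.2 ⟨hxi, hx⟩)
  have memS : ∀ x ∈ S', x ≠ j → x ∈ S ∧ x ≠ i := by
    intro x hx hxj
    rcases Finset.mem_insert.1 hx with h | h
    · exact absurd h hxj
    · exact ⟨(Finset.mem_erase.1 h).2, (Finset.mem_erase.1 h).1⟩
  have hcard : S'.card = S.card := by
    have h1 : j ∉ S.erase i := fun h => hj (Finset.mem_of_mem_erase h)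
    rw [Finset.card_insert_of_notMem h1, Finset.card_erase_of_mem hi]
    have : 1 ≤ S.card := Finset.card_pos.2 ⟨i, hi⟩
    omega
  let e : {x // x ∈ S'} ≃ ι :=
    { toFun := fun x => if h : x.1 = j then i0 else ⟨x.1, (memS x.1 x.2 h).1⟩
      invFun := fun y => if h : y.1 = i then ⟨j, hjS'⟩ else ⟨y.1, memS' y.1 y.2 h⟩
      left_inv := by
        intro x
        dsimp only
        by_cases h : x.1 = j
        · rw [dif_pos h, dif_pos rfl]
          exact Subtype.ext h.symm
        · rw [dif_neg h, dif_neg (memS x.1 x.2 h).2]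
      right_inv := by
        intro y
        dsimp only
        by_cases h : y.1 = i
        · rw [dif_pos h, dif_pos rfl]
          exact Subtype.ext h.symm
        · rw [dif_neg h, dif_neg (fun (hc : y.1 = j) => hj (hc ▸ y.2))] }
  have hcomp : (fun x : {x // x ∈ S'} => q' x.1) = w ∘ e := by
    funext x
    rw [Function.comp_apply]
    by_cases h : x.1 = j
    · have he : e x = i0 := dif_pos h
      rw [he, show w i0 = q' j from if_pos rfl, h]
    · have he : e x = ⟨x.1, (memS x.1 x.2 h).1⟩ := dif_neg h
      have hne : (⟨x.1, (memS x.1 x.2 h).1⟩ : ι) ≠ i0 :=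
        fun hc => (memS x.1 x.2 h).2 (congrArg Subtype.val hc)
      rw [he, show w ⟨x.1, (memS x.1 x.2 h).1⟩ = q' x.1 from if_neg hne]
  have hind' : LinearIndependent ℝ (fun x : {x // x ∈ S'} => q' x.1) := by
    rw [hcomp]
    exact hwind.comp e e.injective
  have hle := hmaxvol S' hcard hind'
  have hgvol' : gvol (fun x : {x // x ∈ S'} => q' x.1) = |α i| * gvol (fun x : ι => q' x.1) := by
    rw [show (fun x : {x // x ∈ S'} => q' x.1) = w ∘ e from hcomp]
    rw [gvol_eq, gvol_eq]
    have : grammat (w ∘ e) = (grammat w).submatrix e e := rfl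
    rw [this, Matrix.det_submatrix_equiv_self, hgramw]
    rw [show grammat (fun x : ι => q' x.1) = G from rfl]
    rw [Real.sqrt_mul (sq_nonneg _), Real.sqrt_sq_eq_abs]
  rw [hgvol'] at hle
  have hgpos : 0 < gvol (fun x : ι => q' x.1) := Real.sqrt_pos.2 hGpos
  exact (mul_le_iff_le_one_left hgpos).1 hle
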